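/- Let a_1,…,a_n be nonzero vectors in ℂ^d, let ω_1,…,ω_n ∈ (0,2), and let R = P_{a_n}^{ω_n} ∘ ⋯ ∘ P_{a_1}^{ω_1} be the composition of the corresponding relaxed projections. Then there exists α < 1 such that ‖R x‖ ≤ α ‖x‖ for every x ∈ span{a_1,…,a_n}. -/

import Mathlib

open scoped InnerProductSpace

/-- The relaxed projection `P_a^ω x = x - ω (⟨x,a⟩/‖a‖²) a` associated to a vector `a ∈ ℂ^d`
and a real relaxation parameter `ω`. -/
noncomputable def relaxProj {d : ℕ} (a : EuclideanSpace ℂ (Fin d)) (ω : ℝ)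
    (x : EuclideanSpace ℂ (Fin d)) : EuclideanSpace ℂ (Fin d) :=
  x - ((ω : ℂ) * ((inner ℂ a x : ℂ) / (‖a‖ : ℂ) ^ 2)) • a

lemma norm_relaxProj_sq {d : ℕ} (a : EuclideanSpace ℂ (Fin d)) (ha : a ≠ 0) (ω : ℝ)
    (y : EuclideanSpace ℂ (Fin d)) :
    ‖relaxProj a ω y‖^2 = ‖y‖^2 - ω*(2-ω) * ‖(⟪a, y⟫_ℂ)‖^2 / ‖a‖^2 := by
  have hna : ‖a‖ ≠ 0 := norm_ne_zero_iff.2 ha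
  rw [relaxProj, @norm_sub_sq ℂ]
  rw [inner_smul_right, norm_smul]
  rw [inner_conj_symm a y |>.symm]
  set t := ⟪y, a⟫_ℂ with ht
  have hct : (starRingEnd ℂ) t * t = ((‖t‖^2 : ℝ) : ℂ) := by
    simpa using RCLike.conj_mul t
  have h1 : ((ω:ℂ) * ((starRingEnd ℂ) t / (‖a‖:ℂ) ^ 2) * t) = (((ω * ‖t‖^2 / ‖a‖^2 : ℝ)) : ℂ) := by
    push_cast
    rw [mul_assoc, div_mul_eq_mul_div, hct]
    push_cast
    ring
  rw [h1]
  have h2 : ‖(ω:ℂ) * ((starRingEnd ℂ) t / (‖a‖:ℂ) ^ 2)‖ = |ω| * ‖t‖ / ‖a‖^2 := by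
    rw [norm_mul, norm_div]
    simp [Complex.norm_real, RCLike.norm_conj]
    ring
  rw [h2]
  have h3 : ‖(starRingEnd ℂ) t‖ = ‖t‖ := RCLike.norm_conj t
  rw [h3]
  have h4 : RCLike.re (((ω * ‖t‖ ^ 2 / ‖a‖ ^ 2 : ℝ)):ℂ) = ω * ‖t‖ ^ 2 / ‖a‖ ^ 2 := by
    norm_cast
  rw [h4]
  have h5 : (|ω| * ‖t‖ / ‖a‖ ^ 2 * ‖a‖) ^ 2 = ω ^ 2 * ‖t‖ ^ 2 / ‖a‖ ^ 2 := by
    rw [mul_pow, div_pow, mul_pow, sq_abs]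
    field_simp
  rw [h5]
  field_simp
  ring

lemma relaxProj_norm_le {d : ℕ} (a : EuclideanSpace ℂ (Fin d)) (ha : a ≠ 0) {ω : ℝ}
    (hω : ω ∈ Set.Ioo (0:ℝ) 2) (y : EuclideanSpace ℂ (Fin d)) :
    ‖relaxProj a ω y‖ ≤ ‖y‖ := by
  have h := norm_relaxProj_sq a ha ω y
  have hnn : 0 ≤ ω*(2-ω) * ‖(⟪a, y⟫_ℂ)‖^2 / ‖a‖^2 := by
    apply div_nonneg _ (sq_nonneg _)
    apply mul_nonneg (mul_nonneg hω.1.le (by linarith [hω.2])) (sq_nonneg _)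
  have h2 : ‖relaxProj a ω y‖^2 ≤ ‖y‖^2 := by linarith
  exact le_of_pow_le_pow_left₀ two_ne_zero (norm_nonneg _) h2

lemma relaxProj_norm_lt {d : ℕ} (a : EuclideanSpace ℂ (Fin d)) (ha : a ≠ 0) {ω : ℝ}
    (hω : ω ∈ Set.Ioo (0:ℝ) 2) (y : EuclideanSpace ℂ (Fin d)) (hy : (⟪a, y⟫_ℂ) ≠ 0) :
    ‖relaxProj a ω y‖ < ‖y‖ := by
  have h := norm_relaxProj_sq a ha ω y
  have hpos : 0 < ω*(2-ω) * ‖(⟪a, y⟫_ℂ)‖^2 / ‖a‖^2 := by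
    have hna : (0:ℝ) < ‖a‖ := norm_pos_iff.2 ha
    have hnt : (0:ℝ) < ‖(⟪a, y⟫_ℂ)‖ := norm_pos_iff.2 hy
    have h2 : (0:ℝ) < 2 - ω := by linarith [hω.2]
    exact div_pos (mul_pos (mul_pos hω.1 h2) (pow_pos hnt 2)) (pow_pos hna 2)
  have h2 : ‖relaxProj a ω y‖^2 < ‖y‖^2 := by linarith
  exact lt_of_pow_lt_pow_left₀ 2 (norm_nonneg _) h2

lemma relaxProj_fixed {d : ℕ} (a : EuclideanSpace ℂ (Fin d)) (ω : ℝ)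
    (y : EuclideanSpace ℂ (Fin d)) (h : (⟪a, y⟫_ℂ) = 0) : relaxProj a ω y = y := by
  simp [relaxProj, h]

/-- The relaxed projection as a continuous linear map. -/
noncomputable def relaxProjL {d : ℕ} (a : EuclideanSpace ℂ (Fin d)) (ω : ℝ) :
    EuclideanSpace ℂ (Fin d) →L[ℂ] EuclideanSpace ℂ (Fin d) :=
  ContinuousLinearMap.id ℂ _ - (((ω:ℂ)/(‖a‖:ℂ)^2) • innerSL ℂ a).smulRight a

lemma relaxProjL_apply {d : ℕ} (a : EuclideanSpace ℂ (Fin d)) (ω : ℝ)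
    (x : EuclideanSpace ℂ (Fin d)) : relaxProjL a ω x = relaxProj a ω x := by
  simp only [relaxProjL, relaxProj, ContinuousLinearMap.sub_apply,
    ContinuousLinearMap.id_apply, ContinuousLinearMap.smulRight_apply,
    ContinuousLinearMap.smul_apply, innerSL_apply_apply, smul_eq_mul]
  congr 1
  ring_nf

/-- The composition `R` as a continuous linear map. -/
noncomputable def bigR {d n : ℕ} (a : Fin n → EuclideanSpace ℂ (Fin d)) (ω : Fin n → ℝ) :
    EuclideanSpace ℂ (Fin d) →L[ℂ] EuclideanSpace ℂ (Fin d) :=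
  (List.finRange n).foldl (fun T i => (relaxProjL (a i) (ω i)).comp T)
    (ContinuousLinearMap.id ℂ _)

lemma foldl_comp_apply {d n : ℕ} (a : Fin n → EuclideanSpace ℂ (Fin d)) (ω : Fin n → ℝ)
    (l : List (Fin n)) (T : EuclideanSpace ℂ (Fin d) →L[ℂ] EuclideanSpace ℂ (Fin d))
    (x : EuclideanSpace ℂ (Fin d)) :
    (l.foldl (fun T i => (relaxProjL (a i) (ω i)).comp T) T) x
      = l.foldl (fun y i => relaxProj (a i) (ω i) y) (T x) := by
  induction l generalizing T with
  | nil => simp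
  | cons i l ih =>
    simp only [List.foldl_cons]
    rw [ih]
    simp [relaxProjL_apply]

lemma bigR_apply {d n : ℕ} (a : Fin n → EuclideanSpace ℂ (Fin d)) (ω : Fin n → ℝ)
    (x : EuclideanSpace ℂ (Fin d)) :
    bigR a ω x = (List.finRange n).foldl (fun y i => relaxProj (a i) (ω i) y) x := by
  rw [bigR, foldl_comp_apply]
  simp

lemma foldl_norm_le {d n : ℕ} {a : Fin n → EuclideanSpace ℂ (Fin d)} {ω : Fin n → ℝ}
    (ha : ∀ i, a i ≠ 0) (hω : ∀ i, ω i ∈ Set.Ioo (0 : ℝ) 2) (l : List (Fin n))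
    (y : EuclideanSpace ℂ (Fin d)) :
    ‖l.foldl (fun y i => relaxProj (a i) (ω i) y) y‖ ≤ ‖y‖ := by
  induction l generalizing y with
  | nil => simp
  | cons i l ih =>
    simp only [List.foldl_cons]
    exact (ih _).trans (relaxProj_norm_le (a i) (ha i) (hω i) y)

lemma foldl_lt_or_fixed {d n : ℕ} {a : Fin n → EuclideanSpace ℂ (Fin d)} {ω : Fin n → ℝ}
    (ha : ∀ i, a i ≠ 0) (hω : ∀ i, ω i ∈ Set.Ioo (0 : ℝ) 2) (l : List (Fin n))
    (y : EuclideanSpace ℂ (Fin d)) :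
    ‖l.foldl (fun y i => relaxProj (a i) (ω i) y) y‖ < ‖y‖ ∨
      (l.foldl (fun y i => relaxProj (a i) (ω i) y) y = y ∧ ∀ i ∈ l, (⟪a i, y⟫_ℂ) = 0) := by
  induction l generalizing y with
  | nil => exact Or.inr ⟨rfl, by simp⟩
  | cons i l ih =>
    simp only [List.foldl_cons]
    by_cases hiy : (⟪a i, y⟫_ℂ) = 0
    · rw [relaxProj_fixed _ _ _ hiy]
      rcases ih y with h | ⟨hfix, hall⟩
      · exact Or.inl h
      · refine Or.inr ⟨hfix, ?_⟩
        intro j hj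
        rcases List.mem_cons.1 hj with rfl | hj
        · exact hiy
        · exact hall j hj
    · left
      calc ‖l.foldl (fun y i => relaxProj (a i) (ω i) y) (relaxProj (a i) (ω i) y)‖
          ≤ ‖relaxProj (a i) (ω i) y‖ := foldl_norm_le ha hω l _
        _ < ‖y‖ := relaxProj_norm_lt (a i) (ha i) (hω i) y hiy

/-- If `R = P_{a_n}^{ω_n} ∘ ⋯ ∘ P_{a_1}^{ω_1}` with all `ω_j ∈ (0,2)`, then there
exists `α < 1` with `‖R x‖ ≤ α ‖x‖` for every `x ∈ span{a_1,…,a_n}`. -/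
theorem stmt_6 {d n : ℕ} (a : Fin n → EuclideanSpace ℂ (Fin d)) (ha : ∀ i, a i ≠ 0)
    (ω : Fin n → ℝ) (hω : ∀ i, ω i ∈ Set.Ioo (0 : ℝ) 2)
    (R : EuclideanSpace ℂ (Fin d) → EuclideanSpace ℂ (Fin d))
    (hR : ∀ x, R x = (List.finRange n).foldl (fun y i => relaxProj (a i) (ω i) y) x) :
    ∃ α : ℝ, α < 1 ∧ ∀ x ∈ Submodule.span ℂ (Set.range a), ‖R x‖ ≤ α * ‖x‖ := by
  set S := Submodule.span ℂ (Set.range a) with hS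
  have hRL : ∀ x, R x = bigR a ω x := fun x => by rw [hR, bigR_apply]
  -- strict contraction on nonzero elements of S
  have hstrict : ∀ x ∈ S, x ≠ 0 → ‖bigR a ω x‖ < ‖x‖ := by
    intro x hxS hx0
    rw [bigR_apply]
    rcases foldl_lt_or_fixed ha hω (List.finRange n) x with h | ⟨_, hall⟩
    · exact h
    · exfalso
      have hall' : ∀ i, (⟪a i, x⟫_ℂ) = 0 := fun i => hall i (List.mem_finRange i)
      have hxO : x ∈ Sᗮ := by
        rw [Submodule.mem_orthogonal]
        intro u hu
        induction hu using Submodule.span_induction with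
        | mem u hu => obtain ⟨i, rfl⟩ := hu; exact hall' i
        | zero => simp
        | add u v _ _ hu hv => rw [inner_add_left, hu, hv, add_zero]
        | smul c u _ hu => rw [inner_smul_left, hu, mul_zero]
      exact hx0 (Submodule.disjoint_def.1 S.orthogonal_disjoint x hxS hxO)
  by_cases htriv : ∀ x ∈ S, x = (0 : EuclideanSpace ℂ (Fin d))
  · refine ⟨0, by norm_num, fun x hx => ?_⟩
    rw [htriv x hx, hRL]
    simp
  · push_neg at htriv
    obtain ⟨x₀, hx₀S, hx₀⟩ := htriv
    -- compact unit sphere of S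
    set K := Metric.sphere (0 : EuclideanSpace ℂ (Fin d)) 1 ∩ (S : Set (EuclideanSpace ℂ (Fin d))) with hK
    have hKc : IsCompact K := (isCompact_sphere 0 1).inter_right S.closed_of_finiteDimensional
    have hKne : K.Nonempty := by
      refine ⟨(‖x₀‖ : ℂ)⁻¹ • x₀, ?_, S.smul_mem _ hx₀S⟩
      rw [mem_sphere_zero_iff_norm, norm_smul]
      have : ‖x₀‖ ≠ 0 := norm_ne_zero_iff.2 hx₀
      simp [this]
    obtain ⟨z, hzK, hz⟩ := hKc.exists_isMaxOn hKne
      (((bigR a ω).continuous.norm).continuousOn)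
    refine ⟨‖bigR a ω z‖, ?_, ?_⟩
    · have hz1 : ‖z‖ = 1 := mem_sphere_zero_iff_norm.1 hzK.1
      have hz0 : z ≠ 0 := by intro h; rw [h, norm_zero] at hz1; norm_num at hz1
      have := hstrict z hzK.2 hz0
      rwa [hz1] at this
    · intro x hx
      rw [hRL]
      rcases eq_or_ne x 0 with rfl | hx0
      · simp
      · have hnx : ‖x‖ ≠ 0 := norm_ne_zero_iff.2 hx0
        set u := (‖x‖ : ℂ)⁻¹ • x with hu
        have huK : u ∈ K := by
          refine ⟨?_, S.smul_mem _ hx⟩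
          rw [mem_sphere_zero_iff_norm, norm_smul]
          simp [hnx]
        have hle : ‖bigR a ω u‖ ≤ ‖bigR a ω z‖ := hz huK
        rw [hu, map_smul, norm_smul] at hle
        have hinv : ‖((‖x‖ : ℂ))⁻¹‖ = ‖x‖⁻¹ := by
          rw [norm_inv]
          simp
        rw [hinv] at hle
        have hpos : (0:ℝ) < ‖x‖ := norm_pos_iff.2 hx0
        calc ‖bigR a ω x‖ = ‖x‖ * (‖x‖⁻¹ * ‖bigR a ω x‖) := by field_simp
          _ ≤ ‖x‖ * ‖bigR a ω z‖ := by
              apply mul_le_mul_of_nonneg_left hle hpos.le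
          _ = ‖bigR a ω z‖ * ‖x‖ := mul_comm _ _
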